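/- In the multi-class, multi-sensitive-attribute setting, define Δ_odds(g) = (1/|𝒴|) Σ_{y∈𝒴} max_{a,a'∈𝒜} |ε_{U_a^y}(g) − ε_{U_{a'}^y}(g)|. If for every group (a,y), the bounds ε_{U_a^y}(g) ≤ (2/(c−1))·ε_{U_a^y}(g_tc) + (2c/(c−1))·R_{U_a^y}(g) and ε_{U_a^y}(g) ≥ ε_{U_a^y}(g_tc) − μ hold, with teacher disparity |ε_{U_a^y}(g_tc) − ε_{U_{a'}^{y'}}(g_tc)| ≤ γ, disagreement bound μ ≤ min_{a,y} ε_{U_a^y}(g_tc), and c > 3, then Δ_odds(g) ≤ (2/(c−1))·(γ + μ + c·max_{a,y} R_{U_a^y}(g)). -/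

import Mathlib

open Finset

/-- Multi-class, multi-sensitive-attribute generalization. With
`Δ_odds(g) = (1/|𝒴|) Σ_y max_{a,a'} |ε_{a,y}(g) − ε_{a',y}(g)|`, per-group upper
bounds via the teacher and consistency losses, lower bounds `ε ≥ ε_tc − μ`,
teacher disparity at most `γ`, `μ ≤ min ε_tc` and `c > 3` give
`Δ_odds(g) ≤ (2/(c−1))·(γ + μ + c·max_{a,y} R_{a,y}(g))`. -/
theorem multiclass_equalized_odds_bound
    {𝒜 𝒴 : Type*} [Fintype 𝒜] [Fintype 𝒴] [Nonempty 𝒜] [Nonempty 𝒴]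
    (ε εtc R : 𝒜 → 𝒴 → ℝ) (c γ μ : ℝ)
    (hc : 3 < c) (hγ : 0 ≤ γ) (hμ : 0 ≤ μ)
    (hεmem : ∀ a y, 0 ≤ ε a y ∧ ε a y ≤ 1)
    (hεtcmem : ∀ a y, 0 ≤ εtc a y ∧ εtc a y ≤ 1)
    (hRmem : ∀ a y, 0 ≤ R a y ∧ R a y ≤ 1)
    (hupper : ∀ a y, ε a y ≤ (2 / (c - 1)) * εtc a y + (2 * c / (c - 1)) * R a y)
    (hlower : ∀ a y, εtc a y - μ ≤ ε a y)
    (hdisp : ∀ a y a' y', |εtc a y - εtc a' y'| ≤ γ)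
    (hμε : ∀ a y, μ ≤ εtc a y) :
    (1 / (Fintype.card 𝒴 : ℝ)) *
        ∑ y : 𝒴, (⨆ a : 𝒜, ⨆ a' : 𝒜, |ε a y - ε a' y|)
      ≤ (2 / (c - 1)) * (γ + μ + c * ⨆ a : 𝒜, ⨆ y : 𝒴, R a y) := by
  have hc1 : (0:ℝ) < c - 1 := by linarith
  set Rmax : ℝ := ⨆ a : 𝒜, ⨆ y : 𝒴, R a y with hRmax
  have hRle : ∀ a y, R a y ≤ Rmax := by
    intro a y
    calc R a y ≤ ⨆ y : 𝒴, R a y := le_ciSup (Set.Finite.bddAbove (Set.finite_range _)) y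
    _ ≤ Rmax := le_ciSup (Set.Finite.bddAbove (Set.finite_range (fun a : 𝒜 => ⨆ y : 𝒴, R a y))) a
  set B : ℝ := (2 / (c - 1)) * (γ + μ + c * Rmax) with hB
  have hRmax0 : 0 ≤ Rmax := le_trans (hRmem Classical.ofNonempty Classical.ofNonempty).1
    (hRle _ _)
  have hB0 : 0 ≤ B := by
    apply mul_nonneg (by positivity)
    nlinarith
  -- pointwise bound
  have key : ∀ a a' (y : 𝒴), ε a y - ε a' y ≤ B := by
    intro a a' y
    have h1 := hupper a y
    have h2 := hlower a' y
    have h3 : εtc a y - εtc a' y ≤ γ := (abs_le.mp (hdisp a y a' y)).2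
    have h4 := hμε a' y
    have hR := hRle a y
    have hfrac : 2 / (c - 1) < 1 := by
      rw [div_lt_one hc1]; linarith
    -- ε a y - ε a' y ≤ (2/(c-1)) εtc a y + (2c/(c-1)) R a y - εtc a' y + μ
    have step : ε a y - ε a' y ≤
        (2 / (c - 1)) * εtc a y + (2 * c / (c - 1)) * R a y - εtc a' y + μ := by
      linarith
    have h5 : (2 / (c - 1)) * εtc a y ≤ (2 / (c - 1)) * (εtc a' y + γ) := by
      apply mul_le_mul_of_nonneg_left (by linarith) (by positivity)
    have h6 : (2 / (c - 1) - 1) * εtc a' y ≤ (2 / (c - 1) - 1) * μ := by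
      apply mul_le_mul_of_nonpos_left h4 (by linarith)
    have h7 : (2 * c / (c - 1)) * R a y ≤ (2 * c / (c - 1)) * Rmax := by
      apply mul_le_mul_of_nonneg_left hR (by positivity)
    have : B = (2 / (c - 1)) * γ + (2 / (c - 1)) * μ + (2 * c / (c - 1)) * Rmax := by
      rw [hB]; field_simp
    nlinarith
  have keyabs : ∀ (y : 𝒴) a a', |ε a y - ε a' y| ≤ B := by
    intro y a a'
    rw [abs_le]
    constructor
    · have := key a' a y; linarith
    · exact key a a' y
  have hsup : ∀ y : 𝒴, (⨆ a : 𝒜, ⨆ a' : 𝒜, |ε a y - ε a' y|) ≤ B := by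
    intro y
    exact ciSup_le fun a => ciSup_le fun a' => keyabs y a a'
  have hcard : (0:ℝ) < (Fintype.card 𝒴 : ℝ) := by
    exact_mod_cast Fintype.card_pos
  have hsum : ∑ y : 𝒴, (⨆ a : 𝒜, ⨆ a' : 𝒜, |ε a y - ε a' y|)
      ≤ (Fintype.card 𝒴 : ℝ) * B := by
    calc ∑ y : 𝒴, (⨆ a : 𝒜, ⨆ a' : 𝒜, |ε a y - ε a' y|)
        ≤ ∑ _y : 𝒴, B := Finset.sum_le_sum fun y _ => hsup y
      _ = (Fintype.card 𝒴 : ℝ) * B := by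
          rw [Finset.sum_const, nsmul_eq_mul]; rfl
  rw [div_mul_eq_mul_div, one_mul, div_le_iff₀ hcard]
  calc ∑ y : 𝒴, (⨆ a : 𝒜, ⨆ a' : 𝒜, |ε a y - ε a' y|)
      ≤ (Fintype.card 𝒴 : ℝ) * B := hsum
    _ = B * (Fintype.card 𝒴 : ℝ) := mul_comm _ _
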